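/- Let P, I be n×n matrices with entries in ℝ ∪ {-∞} such that P_{jj} ≠ -∞ for every index j, and let S = S({p}, {i}, ⌊n/2⌋). If G(μ({p} · S^*)) ∈ Γ, then G(μ({i} ∪ S)) ∈ Γ if and only if G(μ({i} · S^*)) ∈ Γ. -/

import Mathlib

open scoped Classical

namespace NCP

/-- Square max-plus matrices over the extended reals. -/
abbrev MPMat (n : ℕ) := Fin n → Fin n → EReal

/-- Max-plus matrix product: `(A ⊗ B) i j = ⨆ k, A i k + B k j`. -/
noncomputable def mpMul {n : ℕ} (A B : MPMat n) : MPMat n :=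
  fun i j => ⨆ k : Fin n, A i k + B k j

/-- Max-plus identity matrix `E_⊗`. -/
noncomputable def mpId {n : ℕ} : MPMat n :=
  fun i j => if i = j then 0 else ⊥

/-- Max-plus matrix powers. -/
noncomputable def mpPow {n : ℕ} (A : MPMat n) : ℕ → MPMat n
  | 0 => mpId
  | k + 1 => mpMul A (mpPow A k)

/-- Entrywise Kleene star `(A^*) i j = ⨆ k, (A^k) i j`. -/
noncomputable def mpStar {n : ℕ} (A : MPMat n) : MPMat n :=
  fun i j => ⨆ k : ℕ, mpPow A k i j

/-- Entrywise max of two matrices, `A ⊕ B`. -/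
noncomputable def mpAdd {n : ℕ} (A B : MPMat n) : MPMat n :=
  fun i j => max (A i j) (B i j)

/-- `G(A) ∈ Γ`: all diagonal entries of all positive powers are ≤ 0. -/
def InGamma {n : ℕ} (A : MPMat n) : Prop :=
  ∀ i : Fin n, ∀ k : ℕ, 1 ≤ k → mpPow A k i i ≤ 0

/-- `λA`: the matrix with entries `λ + A i j`. -/
noncomputable def sm {n : ℕ} (lam : ℝ) (A : MPMat n) : MPMat n :=
  fun i j => (lam : EReal) + A i j

/-- Division of an extended real by a natural number (±∞ map to ±∞). -/
noncomputable def edivNat (x : EReal) (k : ℕ) : EReal :=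
  if x = ⊤ then ⊤ else if x = ⊥ then ⊥ else ((x.toReal / k : ℝ) : EReal)

/-- The maximum circuit mean of a max-plus matrix. -/
noncomputable def mcm {n : ℕ} (M : MPMat n) : EReal :=
  ⨆ k ∈ Finset.Icc 1 n, ⨆ i : Fin n, edivNat (mpPow M k i i) k

/-- Morphism from words to max-plus matrices determined by `f` on letters. -/
noncomputable def wordMat {α : Type*} {n : ℕ} (f : α → MPMat n) : List α → MPMat n
  | [] => mpId
  | z :: s => mpMul (f z) (wordMat f s)

/-- Entrywise extension of `wordMat` to languages: `μ(L) i j = ⨆ s ∈ L, μ(s) i j`. -/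
noncomputable def langMat {α : Type*} {n : ℕ} (f : α → MPMat n) (L : Language α) : MPMat n :=
  fun i j => ⨆ s ∈ L, wordMat f s i j

/-- The recursive sequence of languages `S(L₁, L₂, k)`. -/
def SL {α : Type*} (L1 L2 : Language α) : ℕ → Language α
  | 0 => 1
  | k + 1 => L1 * SL L1 L2 k * SL L1 L2 k * L2 + L2 * SL L1 L2 k * SL L1 L2 k * L1 + 1


/-- The morphism on the two-letter alphabet `{p, i}` (encoded as `{true, false}`)
sending `p` to `P` and `i` to `I`. -/
noncomputable def mu2 {n : ℕ} (P I : MPMat n) : Bool → MPMat n :=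
  fun z => if z then P else I

/-! ### Auxiliary lemmas -/

section Aux

lemma ereal_iSup_add {ι : Sort*} (f : ι → EReal) (c : EReal) :
    (⨆ i, f i) + c = ⨆ i, f i + c := by
  induction c using EReal.rec with
  | bot =>
    simp [EReal.add_bot]
  | top =>
    by_cases hb : ∀ i, f i = ⊥
    · have h1 : (⨆ i, f i) = ⊥ := iSup_eq_bot.2 hb
      have h2 : (⨆ i, f i + (⊤ : EReal)) = ⊥ :=
        iSup_eq_bot.2 (fun i => by rw [hb i, EReal.bot_add])
      rw [h1, h2, EReal.bot_add]
    · push_neg at hb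
      obtain ⟨i0, hi0⟩ := hb
      have h1 : (⨆ i, f i) ≠ ⊥ := by
        intro h
        exact hi0 (le_bot_iff.1 (h ▸ le_iSup f i0))
      rw [EReal.add_top_of_ne_bot h1]
      exact le_antisymm (le_iSup_of_le i0 (by rw [EReal.add_top_of_ne_bot hi0])) le_top
  | coe r =>
    apply le_antisymm
    · have hcancel : ∀ a : EReal, a - (r : EReal) + (r : EReal) = a := by
        intro a
        rw [sub_eq_add_neg, add_assoc, ← EReal.coe_neg, ← EReal.coe_add, neg_add_cancel,
          EReal.coe_zero, add_zero]
      have key : (⨆ i, f i) ≤ (⨆ i, f i + (r : EReal)) - (r : EReal) := by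
        refine iSup_le fun i => ?_
        have h1 : f i + (r : EReal) ≤ ⨆ i, f i + (r : EReal) :=
          le_iSup (fun i => f i + (r : EReal)) i
        have h2 : f i + (r : EReal) - (r : EReal) ≤ (⨆ i, f i + (r : EReal)) - (r : EReal) := by
          rw [sub_eq_add_neg, sub_eq_add_neg]
          exact add_le_add_left h1 _
        rwa [EReal.add_sub_cancel_right] at h2
      calc (⨆ i, f i) + (r : EReal)
          ≤ ((⨆ i, f i + (r : EReal)) - (r : EReal)) + (r : EReal) := add_le_add_left key _
        _ = ⨆ i, f i + (r : EReal) := hcancel _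
    · exact iSup_le fun i => add_le_add_left (le_iSup f i) _

lemma ereal_add_iSup {ι : Sort*} (f : ι → EReal) (c : EReal) :
    c + (⨆ i, f i) = ⨆ i, c + f i := by
  rw [add_comm, ereal_iSup_add]
  exact iSup_congr fun i => add_comm _ _

lemma mpId_mul {n : ℕ} (A : MPMat n) : mpMul mpId A = A := by
  funext i j
  apply le_antisymm
  · refine iSup_le fun k => ?_
    by_cases h : i = k
    · subst h; simp [mpId]
    · simp [mpId, h, EReal.bot_add]
  · have h := le_iSup (fun k => mpId i k + A k j) i
    simpa [mpId, mpMul] using h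

lemma mpMul_id {n : ℕ} (A : MPMat n) : mpMul A mpId = A := by
  funext i j
  apply le_antisymm
  · refine iSup_le fun k => ?_
    by_cases h : k = j
    · subst h; simp [mpId]
    · simp [mpId, h, EReal.add_bot]
  · have h := le_iSup (fun k => A i k + mpId k j) j
    simpa [mpId, mpMul] using h

lemma mpMul_assoc {n : ℕ} (A B C : MPMat n) :
    mpMul (mpMul A B) C = mpMul A (mpMul B C) := by
  funext i j
  show (⨆ k, (⨆ l, A i l + B l k) + C k j) = ⨆ l, A i l + ⨆ k, B l k + C k j
  calc (⨆ k, (⨆ l, A i l + B l k) + C k j)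
      = ⨆ k, ⨆ l, A i l + B l k + C k j := iSup_congr fun k => ereal_iSup_add _ _
    _ = ⨆ l, ⨆ k, A i l + (B l k + C k j) := by
        rw [iSup_comm]
        exact iSup_congr fun l => iSup_congr fun k => add_assoc _ _ _
    _ = ⨆ l, A i l + ⨆ k, B l k + C k j :=
        iSup_congr fun l => (ereal_add_iSup _ _).symm

lemma wordMat_nil {α : Type*} {n : ℕ} (f : α → MPMat n) : wordMat f [] = mpId := rfl

lemma wordMat_append {α : Type*} {n : ℕ} (f : α → MPMat n) (u v : List α) :
    wordMat f (u ++ v) = mpMul (wordMat f u) (wordMat f v) := by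
  induction u with
  | nil => rw [List.nil_append, wordMat_nil, mpId_mul]
  | cons z u ih =>
    show wordMat f (z :: (u ++ v)) = _
    rw [wordMat, wordMat, ih, mpMul_assoc]

lemma langMat_one {α : Type*} {n : ℕ} (f : α → MPMat n) :
    langMat f (1 : Language α) = mpId := by
  funext i j
  apply le_antisymm
  · refine iSup₂_le fun w hw => ?_
    rw [Language.mem_one] at hw
    subst hw
    exact le_rfl
  · exact le_iSup₂_of_le [] Language.nil_mem_one le_rfl

lemma langMat_mul {α : Type*} {n : ℕ} (f : α → MPMat n) (L M : Language α) :
    langMat f (L * M) = mpMul (langMat f L) (langMat f M) := by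
  funext i j
  apply le_antisymm
  · refine iSup₂_le fun w hw => ?_
    rw [Language.mem_mul] at hw
    obtain ⟨u, hu, v, hv, rfl⟩ := hw
    rw [wordMat_append]
    refine iSup_le fun k => ?_
    calc wordMat f u i k + wordMat f v k j
        ≤ langMat f L i k + langMat f M k j :=
          add_le_add (le_iSup₂_of_le u hu le_rfl) (le_iSup₂_of_le v hv le_rfl)
      _ ≤ ⨆ k, langMat f L i k + langMat f M k j :=
          le_iSup (fun k => langMat f L i k + langMat f M k j) k
  · refine iSup_le fun k => ?_
    show langMat f L i k + langMat f M k j ≤ _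
    unfold langMat
    rw [ereal_iSup_add]
    refine iSup_le fun u => ?_
    rw [ereal_iSup_add]
    refine iSup_le fun hu => ?_
    rw [ereal_add_iSup]
    refine iSup_le fun v => ?_
    rw [ereal_add_iSup]
    refine iSup_le fun hv => ?_
    refine le_iSup₂_of_le (u ++ v) (Language.append_mem_mul hu hv) ?_
    rw [wordMat_append]
    exact le_iSup (fun k => wordMat f u i k + wordMat f v k j) k

lemma mpPow_langMat {α : Type*} {n : ℕ} (f : α → MPMat n) (L : Language α) (k : ℕ) :
    mpPow (langMat f L) k = langMat f (L ^ k) := by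
  induction k with
  | zero => rw [pow_zero, langMat_one]; rfl
  | succ k ih =>
    show mpMul (langMat f L) (mpPow (langMat f L) k) = _
    rw [ih, ← langMat_mul, ← pow_succ']

lemma inGamma_langMat_iff {α : Type*} {n : ℕ} (f : α → MPMat n) (L : Language α) :
    InGamma (langMat f L) ↔ ∀ k, 1 ≤ k → ∀ w ∈ L ^ k, ∀ j : Fin n, wordMat f w j j ≤ 0 := by
  constructor
  · intro h k hk w hw j
    have h2 := h j k hk
    rw [mpPow_langMat] at h2
    exact le_trans (le_iSup₂_of_le w hw le_rfl) h2
  · intro h j k hk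
    rw [mpPow_langMat]
    exact iSup₂_le fun w hw => h k hk w hw j

lemma wordMat_append_ge {α : Type*} {n : ℕ} (f : α → MPMat n) (u v : List α)
    (a b k : Fin n) : wordMat f u a k + wordMat f v k b ≤ wordMat f (u ++ v) a b := by
  rw [wordMat_append]
  exact le_iSup (fun l => wordMat f u a l + wordMat f v l b) k

lemma rotate_diag_le {α : Type*} {n : ℕ} (f : α → MPMat n) (u v : List α)
    (h : ∀ l : Fin n, wordMat f (v ++ u) l l ≤ 0) (j : Fin n) :
    wordMat f (u ++ v) j j ≤ 0 := by
  rw [wordMat_append]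
  refine iSup_le fun l => ?_
  calc wordMat f u j l + wordMat f v l j
      = wordMat f v l j + wordMat f u j l := add_comm _ _
    _ ≤ wordMat f (v ++ u) l l := wordMat_append_ge f v u l l j
    _ ≤ 0 := h l

lemma mem_kstar_of_mem {α : Type*} {L : Language α} {w : List α} (h : w ∈ L) :
    w ∈ KStar.kstar L :=
  Language.mem_kstar.2 ⟨[w], by simp, by simpa using h⟩

lemma append_mem_kstar {α : Type*} {L : Language α} {u v : List α}
    (hu : u ∈ KStar.kstar L) (hv : v ∈ KStar.kstar L) : u ++ v ∈ KStar.kstar L := by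
  rw [Language.mem_kstar] at hu hv ⊢
  obtain ⟨U, rfl, hU⟩ := hu
  obtain ⟨V, rfl, hV⟩ := hv
  refine ⟨U ++ V, by simp, fun y hy => ?_⟩
  rcases List.mem_append.1 hy with h | h
  · exact hU y h
  · exact hV y h

lemma replicate_flatten_mem_kstar {α : Type*} {L : Language α} {w : List α}
    (hw : w ∈ KStar.kstar L) (N : ℕ) :
    (List.replicate N w).flatten ∈ KStar.kstar L := by
  induction N with
  | zero => exact Language.nil_mem_kstar L
  | succ N ih =>
    rw [List.replicate_succ, List.flatten_cons]
    exact append_mem_kstar hw ih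

/-- Key lemma: if `G(μ(p·S^*)) ∈ Γ`, then every word of `S^*` has nonpositive
diagonal entries. -/
lemma crux {n : ℕ} (P I : MPMat n) (S : Language Bool)
    (hP : ∀ i j, P i j ≠ ⊤) (hPd : ∀ j, P j j ≠ ⊥)
    (hyp : InGamma (langMat (mu2 P I) (({[true]} : Language Bool) * KStar.kstar S))) :
    ∀ w ∈ KStar.kstar S, ∀ j : Fin n, wordMat (mu2 P I) w j j ≤ 0 := by
  set f := mu2 P I with hf
  have hp1 : ∀ u ∈ ({[true]} : Language Bool) * KStar.kstar S, ∀ l : Fin n,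
      wordMat f u l l ≤ 0 := by
    intro u hu l
    have h1 := (inGamma_langMat_iff f _).1 hyp 1 le_rfl u (by rwa [pow_one]) l
    exact h1
  have hsing : wordMat f [true] = P := by
    show mpMul (f true) (wordMat f []) = P
    rw [wordMat_nil, mpMul_id]
    rfl
  intro w hw j
  by_contra hcon
  push_neg at hcon
  set c := wordMat f w j j with hc
  have htrue : [true] ∈ ({[true]} : Language Bool) := rfl
  by_cases hct : c = ⊤
  · have hmem : [true] ++ w ∈ ({[true]} : Language Bool) * KStar.kstar S :=
      Language.append_mem_mul htrue hw
    have h1 : (⊤ : EReal) ≤ wordMat f ([true] ++ w) j j := by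
      have h2 := wordMat_append_ge f [true] w j j j
      rw [hsing, ← hc, hct, EReal.add_top_of_ne_bot (hPd j)] at h2
      exact h2
    have h3 := hp1 _ hmem j
    exact absurd (le_trans h1 h3) (by simp)
  · have hcb : c ≠ ⊥ := ne_bot_of_gt hcon
    have hcr : c = ((c.toReal : ℝ) : EReal) := (EReal.coe_toReal hct hcb).symm
    have hcrpos : 0 < c.toReal := by
      have h0 := hcon
      rw [hcr] at h0
      exact_mod_cast h0
    have hPr : P j j = (((P j j).toReal : ℝ) : EReal) :=
      (EReal.coe_toReal (hP j j) (hPd j)).symm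
    set cr := c.toReal
    set pr := (P j j).toReal
    obtain ⟨N, hN⟩ := exists_nat_gt ((-pr) / cr)
    have hNcr : -pr < (N : ℝ) * cr := by
      have := (div_lt_iff₀ hcrpos).1 hN
      linarith
    have hrep : ∀ N : ℕ, (((N : ℝ) * cr : ℝ) : EReal) ≤
        wordMat f (List.replicate N w).flatten j j := by
      intro M
      induction M with
      | zero => simp [wordMat_nil, mpId]
      | succ M ih =>
        rw [List.replicate_succ, List.flatten_cons]
        have h1 : wordMat f w j j + wordMat f (List.replicate M w).flatten j j ≤
            wordMat f (w ++ (List.replicate M w).flatten) j j :=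
          wordMat_append_ge f _ _ j j j
        have h2 : (((M + 1 : ℕ) : ℝ) * cr : ℝ) = cr + (M : ℝ) * cr := by
          push_cast
          ring
        rw [h2, EReal.coe_add]
        calc ((cr : ℝ) : EReal) + (((M : ℝ) * cr : ℝ) : EReal)
            ≤ wordMat f w j j + wordMat f (List.replicate M w).flatten j j := by
              refine add_le_add ?_ ih
              rw [← hc] at *
              rw [hcr]
          _ ≤ _ := h1
    have hmem : [true] ++ (List.replicate N w).flatten ∈
        ({[true]} : Language Bool) * KStar.kstar S :=
      Language.append_mem_mul htrue (replicate_flatten_mem_kstar hw N)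
    have h1 : ((pr + (N : ℝ) * cr : ℝ) : EReal) ≤
        wordMat f ([true] ++ (List.replicate N w).flatten) j j := by
      rw [EReal.coe_add]
      calc ((pr : ℝ) : EReal) + (((N : ℝ) * cr : ℝ) : EReal)
          ≤ wordMat f [true] j j + wordMat f (List.replicate N w).flatten j j := by
            refine add_le_add ?_ (hrep N)
            rw [hsing, hPr]
        _ ≤ _ := wordMat_append_ge f _ _ j j j
    have h3 := hp1 _ hmem j
    have h4 : ((pr + (N : ℝ) * cr : ℝ) : EReal) ≤ 0 := le_trans h1 h3
    have h5 : pr + (N : ℝ) * cr ≤ 0 := by exact_mod_cast h4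
    linarith

lemma flatten_decomp {α : Type*} (A B : Language α) :
    ∀ ws : List (List α), (∀ b ∈ ws, b ∈ A * KStar.kstar B) →
    ∃ cs : List (List α), ws.flatten = cs.flatten ∧ (∀ y ∈ cs, y ∈ A + B) ∧
      ws.length ≤ cs.length := by
  intro ws
  induction ws with
  | nil => exact fun _ => ⟨[], rfl, by simp, le_rfl⟩
  | cons b rest ih =>
    intro hmem
    obtain ⟨cs', h1, h2, h3⟩ := ih (fun t ht => hmem t (List.mem_cons_of_mem _ ht))
    obtain ⟨u, hu, v, hv, rfl⟩ := Language.mem_mul.1 (hmem b List.mem_cons_self)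
    obtain ⟨ds, rfl, hds⟩ := Language.mem_kstar.1 hv
    refine ⟨u :: (ds ++ cs'), ?_, ?_, ?_⟩
    · simp only [List.flatten_cons, List.flatten_append, List.append_assoc, h1]
    · intro y hy
      rcases List.mem_cons.1 hy with rfl | hy
      · exact (Language.mem_add _ _ _).2 (Or.inl hu)
      · rcases List.mem_append.1 hy with h | h
        · exact (Language.mem_add _ _ _).2 (Or.inr (hds y h))
        · exact h2 y h
    · simp only [List.length_cons, List.length_append]
      omega

lemma split_decomp {α : Type*} (A B : Language α) :
    ∀ ws : List (List α), (∀ b ∈ ws, b ∈ A + B) →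
    ∃ (C : List α) (ts : List (List α)), C ∈ KStar.kstar B ∧ (∀ t ∈ ts, t ∈ A * KStar.kstar B) ∧
      ws.flatten = C ++ ts.flatten := by
  intro ws
  induction ws with
  | nil =>
    exact fun _ => ⟨[], [], Language.nil_mem_kstar B,
      fun t ht => absurd ht List.not_mem_nil, rfl⟩
  | cons y rest ih =>
    intro hmem
    obtain ⟨C, ts, hC, hts, hflat⟩ := ih (fun t ht => hmem t (List.mem_cons_of_mem _ ht))
    rcases (Language.mem_add _ _ _).1 (hmem y List.mem_cons_self) with hy | hy
    · refine ⟨[], (y ++ C) :: ts, Language.nil_mem_kstar B, ?_, ?_⟩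
      · intro t ht
        rcases List.mem_cons.1 ht with rfl | ht
        · exact Language.append_mem_mul hy hC
        · exact hts t ht
      · simp only [List.flatten_cons, hflat, List.nil_append, List.append_assoc]
    · refine ⟨y ++ C, ts, append_mem_kstar (mem_kstar_of_mem hy) hC, hts, ?_⟩
      simp only [List.flatten_cons, hflat, List.append_assoc]

lemma flatten_append_mem {α : Type*} (A B : Language α) (C : List α)
    (hC : C ∈ KStar.kstar B) :
    ∀ ts : List (List α), (∀ t ∈ ts, t ∈ A * KStar.kstar B) → ts ≠ [] →
    ts.flatten ++ C ∈ (A * KStar.kstar B) ^ ts.length := by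
  intro ts
  induction ts with
  | nil => exact fun _ h => absurd rfl h
  | cons t rest ih =>
    intro hmem _
    by_cases hr : rest = []
    · subst hr
      obtain ⟨u, hu, v, hv, rfl⟩ := Language.mem_mul.1 (hmem t List.mem_cons_self)
      simp only [List.length_cons, List.length_nil, zero_add, pow_one, List.flatten_cons,
        List.flatten_nil, List.append_nil, List.append_assoc]
      exact Language.append_mem_mul hu (append_mem_kstar hv hC)
    · have h1 := ih (fun t ht => hmem t (List.mem_cons_of_mem _ ht)) hr
      rw [List.length_cons, pow_succ', List.flatten_cons, List.append_assoc]
      exact Language.append_mem_mul (hmem t List.mem_cons_self) h1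

end Aux

/-- with `S = S({p}, {i}, ⌊n/2⌋)`, if `G(μ({p}·S^*)) ∈ Γ`, then
`G(μ({i} ∪ S)) ∈ Γ ↔ G(μ({i}·S^*)) ∈ Γ`. -/
theorem stmt15 {n : ℕ} (P I : MPMat n)
    (hP : ∀ i j, P i j ≠ ⊤) (hI : ∀ i j, I i j ≠ ⊤)
    (hPd : ∀ j, P j j ≠ ⊥)
    (hyp : InGamma (langMat (mu2 P I)
      (({[true]} : Language Bool) *
        KStar.kstar (SL ({[true]} : Language Bool) ({[false]} : Language Bool) (n / 2))))) :
    InGamma (langMat (mu2 P I)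
      (({[false]} : Language Bool) +
        SL ({[true]} : Language Bool) ({[false]} : Language Bool) (n / 2))) ↔
    InGamma (langMat (mu2 P I)
      (({[false]} : Language Bool) *
        KStar.kstar (SL ({[true]} : Language Bool) ({[false]} : Language Bool) (n / 2)))) := by
  set f := mu2 P I with hf
  set S := SL ({[true]} : Language Bool) ({[false]} : Language Bool) (n / 2) with hS
  have hcrux := crux P I S hP hPd hyp
  constructor
  · intro hL
    rw [inGamma_langMat_iff]
    intro k hk w hw j
    rw [Language.mem_pow] at hw
    obtain ⟨ws, rfl, hlen, hmem⟩ := hw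
    obtain ⟨cs, hjoin, hcs, hlencs⟩ := flatten_decomp ({[false]} : Language Bool) S ws hmem
    rw [hjoin]
    exact (inGamma_langMat_iff f _).1 hL cs.length (by omega)
      cs.flatten (Language.mem_pow.2 ⟨cs, rfl, rfl, hcs⟩) j
  · intro hR
    rw [inGamma_langMat_iff]
    intro k hk w hw j
    rw [Language.mem_pow] at hw
    obtain ⟨ws, rfl, hlen, hmem⟩ := hw
    obtain ⟨C, ts, hC, hts, hflat⟩ := split_decomp ({[false]} : Language Bool) S ws hmem
    rw [hflat]
    rcases eq_or_ne ts ([] : List (List Bool)) with rfl | htsne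
    · rw [List.flatten_nil, List.append_nil]
      exact hcrux C hC j
    · have hmem2 := flatten_append_mem ({[false]} : Language Bool) S C hC ts hts htsne
      refine rotate_diag_le f C ts.flatten ?_ j
      intro l
      exact (inGamma_langMat_iff f _).1 hR ts.length (List.length_pos_iff.2 htsne) _ hmem2 l

end NCP
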